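/- Let p be an odd prime with p ≡ 1 (mod ℓ) for an odd prime ℓ, and let s, t be integers with s² − 4p = t²D for D a fundamental discriminant. Then ℓ² divides s² − 4p if and only if ℓ² divides p + 1 − s or ℓ² divides p + 1 + s. -/
import Mathlib


/-- Let `p ≡ 1 (mod ℓ)` for distinct odd primes `p, ℓ`, and `0 < s < 2√p`. Then
`ℓ² ∣ s² − 4p` if and only if `ℓ² ∣ p + 1 − s` or `ℓ² ∣ p + 1 + s`. -/
theorem ellsq_dvd_iff (p ℓ : ℕ) (hp : p.Prime) (hl : ℓ.Prime) (hpodd : Odd p) (hlodd : Odd ℓ)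
    (hne : p ≠ ℓ) (hmod : p ≡ 1 [MOD ℓ]) (s : ℤ) (hs : 0 < s) (hs2 : s ^ 2 < 4 * (p : ℤ)) :
    (ℓ : ℤ) ^ 2 ∣ s ^ 2 - 4 * (p : ℤ) ↔
      ((ℓ : ℤ) ^ 2 ∣ (p : ℤ) + 1 - s ∨ (ℓ : ℤ) ^ 2 ∣ (p : ℤ) + 1 + s) := by
  have hLp : Prime ((ℓ:ℤ)) := Nat.prime_iff_prime_int.mp hl
  have h1p : 1 ≤ p := hp.one_lt.le
  have hd1 : (ℓ:ℤ) ∣ (p:ℤ) - 1 := by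
    have h := (Nat.modEq_iff_dvd' h1p).mp hmod.symm
    have h2 := Int.natCast_dvd_natCast.mpr h
    have h3 : ((p - 1 : ℕ) : ℤ) = (p:ℤ) - 1 := by
      push_cast [h1p]; ring
    rwa [h3] at h2
  have hl4 : ¬ (ℓ:ℤ) ∣ 4 := by
    intro h
    have h4 : ℓ ∣ 4 := by exact_mod_cast h
    have h2 : ℓ ∣ 2 ^ 2 := by simpa using h4
    have := (Nat.prime_dvd_prime_iff_eq hl Nat.prime_two).mp (hl.dvd_of_dvd_pow h2)
    have := Nat.odd_iff.mp hlodd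
    omega
  constructor
  · intro h
    have hLd : (ℓ:ℤ) ∣ s^2 - 4*(p:ℤ) := dvd_trans (dvd_pow_self _ two_ne_zero) h
    have h24 : (ℓ:ℤ) ∣ (s-2)*(s+2) := by
      have heq : (s-2)*(s+2) = (s^2 - 4*(p:ℤ)) + 4*((p:ℤ)-1) := by ring
      rw [heq]; exact dvd_add hLd (Dvd.dvd.mul_left hd1 4)
    have hsq : (ℓ:ℤ)^2 ∣ ((p:ℤ)+1-s)*((p:ℤ)+1+s) := by
      have heq : ((p:ℤ)+1-s)*((p:ℤ)+1+s) = ((p:ℤ)-1)^2 - (s^2 - 4*(p:ℤ)) := by ring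
      rw [heq]; exact dvd_sub (pow_dvd_pow_of_dvd hd1 2) h
    rcases hLp.dvd_mul.mp h24 with hc | hc
    · left
      have hnd : ¬ (ℓ:ℤ) ∣ (p:ℤ)+1+s := by
        intro hd
        apply hl4
        have heq : (4:ℤ) = ((p:ℤ)+1+s) - ((p:ℤ)-1) - (s-2) := by ring
        rw [heq]; exact dvd_sub (dvd_sub hd hd1) hc
      exact (((hLp.coprime_iff_not_dvd).mpr hnd).pow_left).dvd_of_dvd_mul_right hsq
    · right
      have hnd : ¬ (ℓ:ℤ) ∣ (p:ℤ)+1-s := by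
        intro hd
        apply hl4
        have heq : (4:ℤ) = ((p:ℤ)+1-s) - ((p:ℤ)-1) + (s+2) := by ring
        rw [heq]; exact dvd_add (dvd_sub hd hd1) hc
      have hsq' : (ℓ:ℤ)^2 ∣ ((p:ℤ)+1+s)*((p:ℤ)+1-s) := by rwa [mul_comm] at hsq
      exact (((hLp.coprime_iff_not_dvd).mpr hnd).pow_left).dvd_of_dvd_mul_right hsq'
  · intro h
    have hp1 : (ℓ:ℤ)^2 ∣ ((p:ℤ)-1)^2 := pow_dvd_pow_of_dvd hd1 2
    have heq : s^2 - 4*(p:ℤ) = ((p:ℤ)-1)^2 - ((p:ℤ)+1-s)*((p:ℤ)+1+s) := by ring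
    rw [heq]
    rcases h with hd | hd
    · exact dvd_sub hp1 (hd.mul_right _)
    · exact dvd_sub hp1 (hd.mul_left _)
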